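/- Consider LHS in dimension d with n points: for each coordinate j, x_{i,j} = (σ_j(i) + r_{i,j})/n where σ_1,...,σ_d are independent uniformly random permutations of {0,...,n−1} and r_{i,j} are i.i.d. uniform on [0,1). Let m ≤ n. The probability that no point of the sample lies in the box [0, m/n]^d equals the probability that no index i satisfies σ_j(i) < m for all j simultaneously, and this probability is at most (1 − (m/n)^{d-1})^m. -/

import Mathlib

open Set Finset

lemma bern1 (x : ℝ) (t : ℕ) (h0 : 0 ≤ x) (h1 : x ≤ 1) :
    (1 + x) ^ t * (1 - t * x) ≤ 1 := by
  rcases le_or_gt (1 - (t:ℝ) * x) 0 with h | h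
  · have : (0:ℝ) ≤ (1 + x) ^ t := by positivity
    nlinarith
  · have hber : 1 - (t:ℝ) * x ≤ (1 - x) ^ t := by
      have := one_add_mul_le_pow (a := -x) (by linarith) t
      simpa [sub_eq_add_neg, mul_comm, mul_neg] using this
    calc (1 + x) ^ t * (1 - t * x) ≤ (1 + x) ^ t * (1 - x) ^ t := by
          have : (0:ℝ) ≤ (1 + x) ^ t := by positivity
          nlinarith [pow_nonneg (by linarith : (0:ℝ) ≤ 1 + x) t]
      _ = ((1 + x) * (1 - x)) ^ t := (mul_pow _ _ _).symm
      _ ≤ 1 := by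
          apply pow_le_one₀ <;> nlinarith

lemma bern2 (y : ℝ) (t : ℕ) (h0 : 0 ≤ y) (h1 : y ≤ 1) :
    (1 - y) ^ t * (1 + t * y) ≤ 1 := by
  have hber : 1 + (t:ℝ) * y ≤ (1 + y) ^ t := by
    have := one_add_mul_le_pow (a := y) (by linarith) t
    simpa [mul_comm] using this
  calc (1 - y) ^ t * (1 + t * y) ≤ (1 - y) ^ t * (1 + y) ^ t := by
        have : (0:ℝ) ≤ (1 - y) ^ t := pow_nonneg (by linarith) t
        nlinarith
    _ = ((1 - y) * (1 + y)) ^ t := (mul_pow _ _ _).symm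
    _ ≤ 1 := by
        apply pow_le_one₀ <;> nlinarith

set_option maxHeartbeats 1000000 in
lemma step (N M b : ℝ) (t : ℕ) (hN : 2 ≤ N) (hM1 : 1 ≤ M) (hMN : M ≤ N - 1)
    (hb0 : 0 < b) (hb1 : b < 1) (ht1 : 1 ≤ t) (htN : (t : ℝ) ≤ N - 1) :
    M * (1 - b) * ((N - 1 - b * (M - 1)) / (N - 1)) ^ t
      + (N - M) * ((N - 1 - b * M) / (N - 1)) ^ t
      ≤ N * ((N - b * M) / N) ^ (t + 1) := by
  have hN0 : (0:ℝ) < N := by linarith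
  have hN1 : (0:ℝ) < N - 1 := by linarith
  obtain ⟨C, hCdef⟩ : ∃ c : ℝ, c = (N - b * M) / N := ⟨_, rfl⟩
  obtain ⟨Δ, hD⟩ : ∃ c : ℝ, c = b * (N - M) / (N * (N - 1)) := ⟨_, rfl⟩
  obtain ⟨δ, hd⟩ : ∃ c : ℝ, c = b * M / (N * (N - 1)) := ⟨_, rfl⟩
  rw [← hCdef]
  have hC : 0 < C := by rw [hCdef]; apply div_pos _ hN0; nlinarith
  have hΔ : 0 ≤ Δ := by rw [hD]; apply div_nonneg; nlinarith; positivity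
  have hδ0 : 0 < δ := by rw [hd]; apply div_pos; nlinarith; positivity
  have hA : (N - 1 - b * (M - 1)) / (N - 1) = C + Δ := by
    rw [hCdef, hD]; field_simp; ring
  have hB : (N - 1 - b * M) / (N - 1) = C - δ := by
    rw [hCdef, hd]; field_simp; ring
  obtain ⟨u, hu⟩ : ∃ c : ℝ, c = C - t * Δ := ⟨_, rfl⟩
  obtain ⟨w, hw⟩ : ∃ c : ℝ, c = C + t * δ := ⟨_, rfl⟩
  have hub : 1 - b ≤ u := by
    have h1 : C - (N - 1) * Δ = 1 - b := by rw [hCdef, hD]; field_simp; ring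
    have h2 : (t:ℝ) * Δ ≤ (N - 1) * Δ := by nlinarith
    rw [hu]; linarith
  have hu0 : 0 < u := by linarith
  have hw0 : 0 < w := by rw [hw]; nlinarith
  have ht1' : (1:ℝ) ≤ (t:ℕ) := by exact_mod_cast ht1
  have hΔC : Δ ≤ C := by
    have h2 : Δ ≤ (t:ℝ) * Δ := by nlinarith [mul_nonneg (sub_nonneg.mpr ht1') hΔ]
    have h3 : C - (t:ℝ) * Δ = u := hu.symm
    linarith
  have hδC : δ ≤ C := by
    rw [hd, hCdef, div_le_div_iff₀ (by positivity) hN0]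
    have h1 : b * M ≤ N - 1 := by nlinarith
    have h2 : 1 ≤ N - b * M := by linarith
    nlinarith [mul_pos hN0 hN1]
  have key1 : (C + Δ) ^ t * u ≤ C ^ (t + 1) := by
    have hb1' := bern1 (Δ / C) t (by positivity) ((div_le_one hC).mpr hΔC)
    have e1 : C + Δ = C * (1 + Δ / C) := by field_simp
    have e2 : u = C * (1 - t * (Δ / C)) := by rw [hu]; field_simp
    calc (C + Δ) ^ t * u = C ^ (t+1) * ((1 + Δ / C) ^ t * (1 - t * (Δ / C))) := by
          rw [e1, e2, mul_pow, pow_succ]; ring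
      _ ≤ C ^ (t+1) * 1 := mul_le_mul_of_nonneg_left hb1' (by positivity)
      _ = C ^ (t+1) := mul_one _
  have key2 : (C - δ) ^ t * w ≤ C ^ (t + 1) := by
    have hb2' := bern2 (δ / C) t (by positivity) ((div_le_one hC).mpr hδC)
    have e1 : C - δ = C * (1 - δ / C) := by field_simp
    have e2 : w = C * (1 + t * (δ / C)) := by rw [hw]; field_simp
    calc (C - δ) ^ t * w = C ^ (t+1) * ((1 - δ / C) ^ t * (1 + t * (δ / C))) := by
          rw [e1, e2, mul_pow, pow_succ]; ring
      _ ≤ C ^ (t+1) * 1 := mul_le_mul_of_nonneg_left hb2' (by positivity)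
      _ = C ^ (t+1) := mul_one _
  have key3 : M * (1 - b) * w + (N - M) * u ≤ N * (u * w) := by
    have hue : u = ((N - b * M) * (N - 1) - t * (b * (N - M))) / (N * (N - 1)) := by
      rw [hu, hCdef, hD]; field_simp
    have hwe : w = ((N - b * M) * (N - 1) + t * (b * M)) / (N * (N - 1)) := by
      rw [hw, hCdef, hd]; field_simp
    have hid : N * (N-1)^2 * (N * (u * w) - (M * (1 - b) * w + (N - M) * u))
        = t * b^2 * M * (N - M) * ((N - 1) - t) := by
      rw [hue, hwe]; field_simp; ring
    have hpos : (0:ℝ) ≤ t * b^2 * M * (N - M) * ((N - 1) - t) := by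
      have : (0:ℝ) ≤ (t:ℝ) * b^2 := by positivity
      have h1 : (0:ℝ) ≤ M := by linarith
      have h2 : (0:ℝ) ≤ N - M := by linarith
      have h3 : (0:ℝ) ≤ (N - 1) - t := by linarith
      positivity
    nlinarith [mul_pos hN0 (mul_pos hN1 hN1)]
  rw [hA, hB]
  have h1 : (C + Δ) ^ t ≤ C ^ (t+1) / u := (le_div_iff₀ hu0).mpr key1
  have h2 : (C - δ) ^ t ≤ C ^ (t+1) / w := (le_div_iff₀ hw0).mpr key2
  have hMb : 0 ≤ M * (1 - b) := by nlinarith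
  have hNM : 0 ≤ N - M := by linarith
  calc M * (1 - b) * (C + Δ) ^ t + (N - M) * (C - δ) ^ t
      ≤ M * (1 - b) * (C ^ (t+1) / u) + (N - M) * (C ^ (t+1) / w) := by
        apply add_le_add
        · exact mul_le_mul_of_nonneg_left h1 hMb
        · exact mul_le_mul_of_nonneg_left h2 hNM
    _ = C ^ (t+1) * (M * (1 - b) / u + (N - M) / w) := by ring
    _ ≤ C ^ (t+1) * N := by
        apply mul_le_mul_of_nonneg_left _ (by positivity)
        rw [div_add_div _ _ (ne_of_gt hu0) (ne_of_gt hw0),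
          div_le_iff₀ (mul_pos hu0 hw0)]
        linarith [key3]
    _ = N * C ^ (t+1) := by ring

lemma stepFull (n α s : ℕ) (hα : α ≤ n + 1) (hs : s ≤ n) (a : ℝ)
    (ha0 : 0 ≤ a) (ha1 : a ≤ 1) :
    (α:ℝ) * a * (1 - (1-a) * ((α:ℝ)-1) / n) ^ s
      + ((n:ℝ) + 1 - α) * (1 - (1-a) * α / n) ^ s
    ≤ ((n:ℝ) + 1) * (1 - (1-a) * α / ((n:ℝ)+1)) ^ (s+1) := by
  have hα' : (α:ℝ) ≤ (n:ℝ) + 1 := by exact_mod_cast hα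
  rcases Nat.eq_zero_or_pos s with hs0 | hs1
  · subst hs0
    have h1 : ((n:ℝ)+1) * (1 - (1-a) * α / ((n:ℝ)+1)) ^ (0+1)
        = (n:ℝ) + 1 - (1-a) * α := by
      have : ((n:ℝ)+1) ≠ 0 := by positivity
      simp only [zero_add, pow_one]; field_simp
    rw [h1]; simp; nlinarith
  · have hn1 : 1 ≤ n := le_trans hs1 hs
    have hn' : (1:ℝ) ≤ (n:ℝ) := by exact_mod_cast hn1
    have hnne : (n:ℝ) ≠ 0 := by linarith
    rcases Nat.eq_zero_or_pos α with hα0 | hα1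
    · subst hα0
      simp only [Nat.cast_zero, zero_mul, mul_zero, zero_div, sub_zero, one_pow, mul_one]
      nlinarith
    · rcases eq_or_lt_of_le ha1 with ha1' | ha1'
      · subst ha1'
        simp only [sub_self, zero_mul, zero_div, sub_zero, one_pow, mul_one, one_mul]
        nlinarith
      · rcases eq_or_lt_of_le hα with hαtop | hαlt
        · -- α = n+1
          have hc : (α:ℝ) = (n:ℝ) + 1 := by exact_mod_cast hαtop
          have e1 : 1 - (1-a) * ((α:ℝ)-1) / n = a := by
            rw [hc]; field_simp; ring
          have e2 : 1 - (1-a) * (α:ℝ) / ((n:ℝ)+1) = a := by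
            rw [hc]; field_simp; ring
          rw [e1, e2, hc]
          have : ((n:ℝ)+1) * a * a ^ s = ((n:ℝ)+1) * a ^ (s+1) := by
            rw [pow_succ]; ring
          rw [this]; simp
        · -- 1 ≤ α ≤ n
          have hαn : (α:ℝ) ≤ (n:ℝ) := by
            have : α ≤ n := by omega
            exact_mod_cast this
          rcases eq_or_lt_of_le ha0 with ha0' | ha0'
          · -- a = 0
            rw [← ha0']
            simp only [sub_zero, one_mul, zero_mul, mul_zero, zero_add]
            have hR : ((n:ℝ)+1) * (1 - (α:ℝ)/((n:ℝ)+1)) ^ (s+1)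
                = ((n:ℝ)+1-α) * (1 - (α:ℝ)/((n:ℝ)+1)) ^ s := by
              rw [pow_succ]
              have : ((n:ℝ)+1) * (1 - (α:ℝ)/((n:ℝ)+1)) = (n:ℝ)+1-α := by
                field_simp
              linear_combination (1 - (α:ℝ)/((n:ℝ)+1)) ^ s * this
            rw [hR]
            have h0 : (0:ℝ) ≤ 1 - (α:ℝ)/n :=
              sub_nonneg.mpr ((div_le_one (by positivity)).mpr hαn)
            have hle : 1 - (α:ℝ)/n ≤ 1 - (α:ℝ)/((n:ℝ)+1) := by
              have : (α:ℝ)/((n:ℝ)+1) ≤ (α:ℝ)/n :=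
                div_le_div_of_nonneg_left (by positivity) (by linarith) (by linarith)
              linarith
            exact mul_le_mul_of_nonneg_left (pow_le_pow_left₀ h0 hle s) (by linarith)
          · -- main case
            have hb0 : 0 < 1 - a := by linarith
            have := step ((n:ℝ)+1) (α:ℝ) (1-a) s (by linarith) (by exact_mod_cast hα1)
              (by linarith) hb0 (by linarith) hs1 (by push_cast; linarith [show (s:ℝ) ≤ n by exact_mod_cast hs])
            have e1 : ((n:ℝ)+1) - 1 = (n:ℝ) := by ring
            rw [e1] at this
            have e2 : ((n:ℝ) - (1-a) * ((α:ℝ)-1)) / n = 1 - (1-a) * ((α:ℝ)-1) / n := by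
              field_simp
            have e3 : ((n:ℝ) - (1-a) * α) / n = 1 - (1-a) * α / n := by
              field_simp
            have e4 : (((n:ℝ)+1) - (1-a) * α) / ((n:ℝ)+1) = 1 - (1-a) * α / ((n:ℝ)+1) := by
              field_simp
            rw [e2, e3, e4] at this
            calc (α:ℝ) * a * (1 - (1-a) * ((α:ℝ)-1) / n) ^ s
                  + ((n:ℝ) + 1 - α) * (1 - (1-a) * α / n) ^ s
                = (α:ℝ) * (1 - (1-a)) * (1 - (1-a) * ((α:ℝ)-1) / n) ^ s
                  + (((n:ℝ)+1) - α) * (1 - (1-a) * α / n) ^ s := by ring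
              _ ≤ ((n:ℝ)+1) * (1 - (1-a) * α / ((n:ℝ)+1)) ^ (s+1) := this

lemma lemA : ∀ (n : ℕ) (S A : Finset (Fin n)) (a : ℝ), 0 ≤ a → a ≤ 1 →
    (∑ τ : Equiv.Perm (Fin n), a ^ (S.filter fun i => τ i ∈ A).card)
      ≤ (n.factorial : ℝ) * (1 - (1-a) * A.card / n) ^ S.card := by
  intro n
  induction n with
  | zero =>
    intro S A a ha0 ha1
    have hS : S = ∅ := Subsingleton.elim _ _
    have hA : A = ∅ := Subsingleton.elim _ _
    subst hS; subst hA
    simp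
  | succ n ih =>
    intro S A a ha0 ha1
    rcases S.eq_empty_or_nonempty with hS | ⟨i₀, hi₀⟩
    · subst hS
      simp [Fintype.card_perm]
    · -- reindex so that 0 ∈ S
      set π : Equiv.Perm (Fin (n+1)) := Equiv.swap 0 i₀ with hπ
      have hre : (∑ τ : Equiv.Perm (Fin (n+1)), a ^ (S.filter fun i => τ i ∈ A).card)
          = ∑ τ : Equiv.Perm (Fin (n+1)), a ^ ((S.image π).filter fun i => τ i ∈ A).card := by
        rw [← Equiv.sum_comp (Equiv.mulRight π⁻¹)
          (fun τ => a ^ ((S.image π).filter fun i => τ i ∈ A).card)]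
        apply Finset.sum_congr rfl
        intro τ _
        congr 1
        apply Finset.card_bij (fun i _ => π i)
        · intro i hi
          simp only [Finset.mem_filter] at hi ⊢
          refine ⟨Finset.mem_image_of_mem π hi.1, ?_⟩
          simpa using hi.2
        · intro i hi j hj hij
          exact π.injective hij
        · intro j hj
          simp only [Finset.mem_filter, Finset.mem_image] at hj
          obtain ⟨⟨i, hiS, hij⟩, hjA⟩ := hj
          refine ⟨i, ?_, hij⟩
          simp only [Finset.mem_filter]
          refine ⟨hiS, ?_⟩
          subst hij
          simpa using hjA
      rw [hre]
      have h0S : (0:Fin (n+1)) ∈ S.image π := by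
        refine Finset.mem_image.mpr ⟨i₀, hi₀, ?_⟩
        simp [hπ]
      rw [← Finset.card_image_of_injective S π.injective]
      -- now work with S' := S.image π which contains 0
      set S' : Finset (Fin (n+1)) := S.image π with hS'
      clear_value S'
      clear hS'
      -- decompose permutations
      set S1 : Finset (Fin n) := univ.filter (fun x => x.succ ∈ S') with hS1
      set B : Fin (n+1) → Finset (Fin n) :=
        fun p => univ.filter (fun x => Equiv.swap 0 p x.succ ∈ A) with hB
      have hdec : (∑ τ : Equiv.Perm (Fin (n+1)), a ^ (S'.filter fun i => τ i ∈ A).card)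
          = ∑ p : Fin (n+1), ∑ e : Equiv.Perm (Fin n),
              (if p ∈ A then a else 1) * a ^ ((S1.filter fun x => e x ∈ B p).card) := by
        rw [← Equiv.sum_comp Equiv.Perm.decomposeFin.symm
          (fun τ => a ^ (S'.filter fun i => τ i ∈ A).card), Fintype.sum_prod_type]
        apply Finset.sum_congr rfl
        intro p _
        apply Finset.sum_congr rfl
        intro e _
        have hset : (S'.filter fun i => (Equiv.Perm.decomposeFin.symm (p, e)) i ∈ A)
            = (if p ∈ A then ({0} : Finset (Fin (n+1))) else ∅)
              ∪ (S1.filter fun x => e x ∈ B p).image Fin.succ := by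
          ext i
          refine Fin.cases ?_ ?_ i
          · by_cases hp : p ∈ A <;>
              simp [hp, h0S, (Fin.succ_ne_zero _), eq_comm]
          · intro x
            by_cases hp : p ∈ A <;>
              simp [hp, Equiv.Perm.decomposeFin_symm_apply_succ, hS1, hB,
                (Fin.succ_ne_zero x), Fin.succ_inj]
        rw [hset]
        have hdisj : Disjoint (if p ∈ A then ({0} : Finset (Fin (n+1))) else ∅)
            ((S1.filter fun x => e x ∈ B p).image Fin.succ) := by
          by_cases hp : p ∈ A <;> simp [hp, Finset.disjoint_left, Fin.succ_ne_zero, eq_comm]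
        rw [Finset.card_union_of_disjoint hdisj,
          Finset.card_image_of_injective _ (Fin.succ_injective n)]
        by_cases hp : p ∈ A <;> simp [hp, pow_add, pow_succ] <;> ring
      rw [hdec]
      -- cardinality facts
      have hBcard : ∀ p, (B p).card = (A.erase p).card := by
        intro p
        apply Finset.card_bij (fun x _ => Equiv.swap 0 p x.succ)
        · intro x hx
          simp only [hB, Finset.mem_filter] at hx
          refine Finset.mem_erase.mpr ⟨?_, hx.2⟩
          intro hcon
          have : x.succ = (0 : Fin (n+1)) := by
            have := congrArg (Equiv.swap (0:Fin (n+1)) p) hcon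
            simpa [Equiv.swap_apply_right] using this
          exact Fin.succ_ne_zero x this
        · intro x hx y hy hxy
          exact Fin.succ_injective n ((Equiv.swap 0 p).injective hxy)
        · intro q hq
          obtain ⟨hqp, hqA⟩ := Finset.mem_erase.mp hq
          have hne : Equiv.swap (0:Fin (n+1)) p q ≠ 0 := by
            intro hcon
            have := congrArg (Equiv.swap (0:Fin (n+1)) p) hcon
            simp [Equiv.swap_apply_left] at this
            exact hqp this
          obtain ⟨x, hx⟩ : ∃ x : Fin n, x.succ = Equiv.swap (0:Fin (n+1)) p q :=
            ⟨(Equiv.swap (0:Fin (n+1)) p q).pred hne, Fin.succ_pred _ _⟩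
          refine ⟨x, ?_, ?_⟩
          · simp only [hB, Finset.mem_filter, Finset.mem_univ, true_and, hx]
            simpa using hqA
          · rw [hx]; simp
      have hS1card : S'.card = S1.card + 1 := by
        have himg : S1.image Fin.succ = S'.erase 0 := by
          ext y
          refine Fin.cases ?_ ?_ y
          · simp [Fin.succ_ne_zero, eq_comm]
          · intro x
            simp [hS1, Fin.succ_inj, Fin.succ_ne_zero, Finset.mem_erase]
        have h1 : S1.card = (S'.erase 0).card := by
          rw [← himg, Finset.card_image_of_injective _ (Fin.succ_injective n)]
        rw [h1, Finset.card_erase_of_mem h0S]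
        have : 1 ≤ S'.card := Finset.card_pos.mpr ⟨0, h0S⟩
        omega
      have hinner : ∀ p : Fin (n+1),
          (∑ e : Equiv.Perm (Fin n),
            (if p ∈ A then a else 1) * a ^ ((S1.filter fun x => e x ∈ B p).card))
          ≤ (if p ∈ A
              then a * ((n.factorial:ℝ) * (1-(1-a)*((A.card:ℝ)-1)/n) ^ S1.card)
              else (n.factorial:ℝ) * (1-(1-a)*(A.card:ℝ)/n) ^ S1.card) := by
        intro p
        rw [← Finset.mul_sum]
        by_cases hp : p ∈ A
        · simp only [hp, if_true]
          apply mul_le_mul_of_nonneg_left _ ha0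
          have hIH := ih S1 (B p) a ha0 ha1
          rw [hBcard p, Finset.card_erase_of_mem hp] at hIH
          have hc1 : 1 ≤ A.card := Finset.card_pos.mpr ⟨p, hp⟩
          rwa [Nat.cast_sub hc1, Nat.cast_one] at hIH
        · simp only [hp, if_false, one_mul]
          have hIH := ih S1 (B p) a ha0 ha1
          rwa [hBcard p, Finset.erase_eq_of_notMem hp] at hIH
      have hcards1 : (univ.filter fun p : Fin (n+1) => p ∈ A) = A := by
        ext p; simp
      have hcards2 : (univ.filter fun p : Fin (n+1) => ¬ p ∈ A).card = (n+1) - A.card := by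
        rw [Finset.filter_not, Finset.card_sdiff_of_subset (by rw [hcards1]; exact Finset.subset_univ A),
          hcards1, Finset.card_univ, Fintype.card_fin]
      have hαle : A.card ≤ n + 1 := by
        simpa using Finset.card_le_univ A
      have hsle : S1.card ≤ n := by
        simpa using Finset.card_le_univ S1
      have hfac : (0:ℝ) ≤ (n.factorial : ℝ) := by positivity
      calc (∑ p : Fin (n+1), ∑ e : Equiv.Perm (Fin n),
              (if p ∈ A then a else 1) * a ^ ((S1.filter fun x => e x ∈ B p).card))
          ≤ ∑ p : Fin (n+1), (if p ∈ A
              then a * ((n.factorial:ℝ) * (1-(1-a)*((A.card:ℝ)-1)/n) ^ S1.card)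
              else (n.factorial:ℝ) * (1-(1-a)*(A.card:ℝ)/n) ^ S1.card) :=
            Finset.sum_le_sum (fun p _ => hinner p)
        _ = (A.card : ℝ) * (a * ((n.factorial:ℝ) * (1-(1-a)*((A.card:ℝ)-1)/n) ^ S1.card))
            + (((n:ℝ)+1) - A.card) * ((n.factorial:ℝ) * (1-(1-a)*(A.card:ℝ)/n) ^ S1.card) := by
            rw [Finset.sum_ite, Finset.sum_const, Finset.sum_const, hcards1, hcards2,
              nsmul_eq_mul, nsmul_eq_mul, Nat.cast_sub hαle]
            push_cast
            ring
        _ = (n.factorial:ℝ) * ((A.card:ℝ) * a * (1-(1-a)*((A.card:ℝ)-1)/n) ^ S1.card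
            + (((n:ℝ)+1) - A.card) * (1-(1-a)*(A.card:ℝ)/n) ^ S1.card) := by ring
        _ ≤ (n.factorial:ℝ) * (((n:ℝ)+1) * (1 - (1-a) * A.card / ((n:ℝ)+1)) ^ (S1.card+1)) := by
            apply mul_le_mul_of_nonneg_left _ hfac
            exact stepFull n A.card S1.card hαle hsle a ha0 ha1
        _ = ((n+1).factorial : ℝ) * (1 - (1-a) * A.card / ((n:ℝ)+1)) ^ S'.card := by
            rw [Nat.factorial_succ, hS1card]
            push_cast
            ring
        _ = ((n+1).factorial : ℝ) * (1 - (1-a) * A.card / ((n+1:ℕ):ℝ)) ^ S'.card := by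
            push_cast
            ring

lemma cardAm (n m : ℕ) (hmn : m ≤ n) :
    ((univ : Finset (Fin n)).filter fun x : Fin n => (x:ℕ) < m).card = m := by
  have h : ((univ : Finset (Fin n)).filter fun x : Fin n => (x:ℕ) < m)
      = (univ : Finset (Fin m)).image (Fin.castLE hmn) := by
    ext x
    simp only [Finset.mem_filter, Finset.mem_univ, true_and, Finset.mem_image]
    constructor
    · intro hx
      exact ⟨⟨(x:ℕ), hx⟩, by ext; simp⟩
    · rintro ⟨y, rfl⟩
      simpa using y.isLt
  rw [h, Finset.card_image_of_injective _ (Fin.castLE_injective hmn)]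
  simp

lemma lemMain (n m : ℕ) (hmn : m ≤ n) (hn : 1 ≤ n) :
    ∀ (c : ℕ) (S : Finset (Fin n)),
    (∑ τ : Fin c → Equiv.Perm (Fin n),
        (if ∀ i ∈ S, ∃ j, m ≤ ((τ j) i : ℕ) then (1:ℝ) else 0))
      ≤ ((n.factorial : ℝ)) ^ c * (1 - ((m:ℝ)/n) ^ c) ^ S.card := by
  have hn0 : (0:ℝ) < n := by exact_mod_cast hn
  have hq0 : (0:ℝ) ≤ (m:ℝ)/n := by positivity
  have hq1 : (m:ℝ)/n ≤ 1 := by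
    rw [div_le_one hn0]; exact_mod_cast hmn
  intro c
  induction c with
  | zero =>
    intro S
    rcases S.eq_empty_or_nonempty with hS | ⟨i, hi⟩
    · subst hS
      simp
    · have hfalse : ∀ τ : Fin 0 → Equiv.Perm (Fin n),
          ¬ (∀ i ∈ S, ∃ j : Fin 0, m ≤ ((τ j) i : ℕ)) := by
        intro τ h
        rcases h i hi with ⟨j, -⟩
        exact j.elim0
      simp only [hfalse, if_false, Finset.sum_const_zero, pow_zero, one_mul]
      have : (0:ℝ) ≤ (1 - ((m:ℝ)/n) ^ 0) ^ S.card := by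
        simp
      simpa using this
  | succ c ih =>
    intro S
    have hsum : (∑ τ : Fin (c+1) → Equiv.Perm (Fin n),
          (if ∀ i ∈ S, ∃ j, m ≤ ((τ j) i : ℕ) then (1:ℝ) else 0))
        = ∑ τ₀ : Equiv.Perm (Fin n), ∑ τ' : Fin c → Equiv.Perm (Fin n),
          (if ∀ i ∈ S.filter (fun i => ((τ₀ i : ℕ) < m)), ∃ j, m ≤ ((τ' j) i : ℕ)
            then (1:ℝ) else 0) := by
      rw [← Equiv.sum_comp (Fin.consEquiv fun _ => Equiv.Perm (Fin n))
        (fun τ => if ∀ i ∈ S, ∃ j, m ≤ ((τ j) i : ℕ) then (1:ℝ) else 0),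
        Fintype.sum_prod_type]
      apply Finset.sum_congr rfl
      intro τ₀ _
      apply Finset.sum_congr rfl
      intro τ' _
      congr 1
      apply propext
      constructor
      · intro h i hi
        rw [Finset.mem_filter] at hi
        rcases h i hi.1 with ⟨j, hj⟩
        refine Fin.cases ?_ ?_ j hj
        · intro hj0
          simp only [Fin.consEquiv_apply, Fin.cons_zero] at hj0
          omega
        · intro j hjs
          simp only [Fin.consEquiv_apply, Fin.cons_succ] at hjs
          exact ⟨j, hjs⟩
      · intro h i hi
        by_cases hτ0 : (τ₀ i : ℕ) < m
        · rcases h i (Finset.mem_filter.mpr ⟨hi, hτ0⟩) with ⟨j, hj⟩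
          exact ⟨j.succ, by simpa [Fin.cons_succ] using hj⟩
        · exact ⟨0, by simpa [Fin.cons_zero] using le_of_not_gt hτ0⟩
    rw [hsum]
    set a : ℝ := 1 - ((m:ℝ)/n)^c with ha
    have ha0 : 0 ≤ a := by
      rw [ha]
      have : ((m:ℝ)/n)^c ≤ 1 := pow_le_one₀ hq0 hq1
      linarith
    have ha1 : a ≤ 1 := by
      rw [ha]
      have : 0 ≤ ((m:ℝ)/n)^c := by positivity
      linarith
    calc (∑ τ₀ : Equiv.Perm (Fin n), ∑ τ' : Fin c → Equiv.Perm (Fin n),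
          (if ∀ i ∈ S.filter (fun i => ((τ₀ i : ℕ) < m)), ∃ j, m ≤ ((τ' j) i : ℕ)
            then (1:ℝ) else 0))
        ≤ ∑ τ₀ : Equiv.Perm (Fin n),
            ((n.factorial : ℝ)) ^ c * a ^ (S.filter (fun i => ((τ₀ i : ℕ) < m))).card := by
          exact Finset.sum_le_sum (fun τ₀ _ => ih _)
      _ = ((n.factorial : ℝ)) ^ c * ∑ τ₀ : Equiv.Perm (Fin n),
            a ^ ((S.filter fun i => τ₀ i ∈ (univ.filter fun x : Fin n => (x:ℕ) < m)).card) := by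
          rw [← Finset.mul_sum]
          congr 1
          apply Finset.sum_congr rfl
          intro τ₀ _
          congr 2
          apply Finset.filter_congr
          intro i _
          simp
      _ ≤ ((n.factorial : ℝ)) ^ c * ((n.factorial : ℝ)
            * (1 - (1-a) * ((univ.filter fun x : Fin n => (x:ℕ) < m).card) / n) ^ S.card) := by
          apply mul_le_mul_of_nonneg_left (lemA n S _ a ha0 ha1) (by positivity)
      _ = ((n.factorial : ℝ)) ^ (c+1) * (1 - ((m:ℝ)/n) ^ (c+1)) ^ S.card := by
          rw [cardAm n m hmn, ha]
          rw [pow_succ, pow_succ]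
          ring_nf


lemma cardPre (n m : ℕ) (hmn : m ≤ n) (τ : Equiv.Perm (Fin n)) :
    ((univ : Finset (Fin n)).filter fun i : Fin n => ((τ i : ℕ) < m)).card = m := by
  conv_rhs => rw [← cardAm n m hmn]
  apply Finset.card_bij (fun i _ => τ i)
  · intro i hi
    simp only [Finset.mem_filter, Finset.mem_univ, true_and] at hi ⊢
    exact hi
  · intro i _ j _ h
    exact τ.injective h
  · intro x hx
    simp only [Finset.mem_filter, Finset.mem_univ, true_and] at hx ⊢
    exact ⟨τ.symm x, by simp [hx], by simp⟩

/-- d-dimensional Latin Hypercube Sampling with `n` points: for permutations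
`σ j` (one per coordinate) and jitters `r i j ∈ [0,1)`, the `j`-th coordinate of the
`i`-th point is `(σ j i + r i j)/n`.  (1) Missing the box `[0, m/n)^d` is equivalent to
no index `i` satisfying `σ j i < m` for all `j`; (2) the probability of this event under
uniformly random independent permutations is at most `(1 - (m/n)^(d-1))^m`. -/
theorem stmt9 (d n m : ℕ) (hd : 1 ≤ d) (hm : 1 ≤ m) (hmn : m ≤ n)
    (σ : Fin d → Equiv.Perm (Fin n)) :
    (∀ r : Fin n → Fin d → ℝ, (∀ i j, r i j ∈ Set.Ico (0 : ℝ) 1) →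
      ((¬ ∃ i : Fin n, ∀ j : Fin d,
          ((σ j i : ℝ) + r i j) / n ∈ Set.Ico (0 : ℝ) ((m : ℝ) / n)) ↔
        ¬ ∃ i : Fin n, ∀ j : Fin d, (σ j i : ℕ) < m))
    ∧ ((Finset.univ.filter fun τ : Fin d → Equiv.Perm (Fin n) =>
          ¬ ∃ i : Fin n, ∀ j : Fin d, (τ j i : ℕ) < m).card : ℝ)
          / ((n.factorial : ℝ) ^ d)
        ≤ (1 - ((m : ℝ) / n) ^ (d - 1)) ^ m := by
  have hn : 1 ≤ n := le_trans hm hmn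
  have hn0 : (0:ℝ) < n := by exact_mod_cast hn
  constructor
  · intro r hr
    apply not_congr
    apply exists_congr
    intro i
    apply forall_congr'
    intro j
    rcases hr i j with ⟨hr0, hr1⟩
    constructor
    · rintro ⟨h0, h1⟩
      rw [div_lt_div_iff₀ hn0 hn0] at h1
      have h3 : ((σ j i : ℕ) : ℝ) < m := by nlinarith
      exact_mod_cast h3
    · intro hlt
      have h1 : ((σ j i : ℕ):ℝ) + 1 ≤ m := by
        have : (σ j i : ℕ) + 1 ≤ m := hlt
        exact_mod_cast this
      constructor
      · positivity
      · rw [div_lt_div_iff₀ hn0 hn0]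
        nlinarith
  · obtain ⟨e, rfl⟩ : ∃ e, d = e + 1 := ⟨d - 1, by omega⟩
    rw [div_le_iff₀ (by positivity)]
    have hcount : ((Finset.univ.filter fun τ : Fin (e+1) → Equiv.Perm (Fin n) =>
          ¬ ∃ i : Fin n, ∀ j : Fin (e+1), (τ j i : ℕ) < m).card : ℝ)
        = ∑ τ : Fin (e+1) → Equiv.Perm (Fin n),
            (if ∀ i ∈ (univ : Finset (Fin n)), ∃ j, m ≤ ((τ j) i : ℕ) then (1:ℝ) else 0) := by
      rw [Finset.card_filter]
      push_cast
      apply Finset.sum_congr rfl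
      intro τ _
      refine if_congr ?_ rfl rfl
      push_neg
      simp [not_lt]
    rw [hcount]
    have hsum : (∑ τ : Fin (e+1) → Equiv.Perm (Fin n),
          (if ∀ i ∈ (univ : Finset (Fin n)), ∃ j, m ≤ ((τ j) i : ℕ) then (1:ℝ) else 0))
        = ∑ τ₀ : Equiv.Perm (Fin n), ∑ τ' : Fin e → Equiv.Perm (Fin n),
          (if ∀ i ∈ (univ : Finset (Fin n)).filter (fun i => ((τ₀ i : ℕ) < m)),
              ∃ j, m ≤ ((τ' j) i : ℕ) then (1:ℝ) else 0) := by
      rw [← Equiv.sum_comp (Fin.consEquiv fun _ => Equiv.Perm (Fin n))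
        (fun τ => if ∀ i ∈ (univ : Finset (Fin n)), ∃ j, m ≤ ((τ j) i : ℕ) then (1:ℝ) else 0),
        Fintype.sum_prod_type]
      apply Finset.sum_congr rfl
      intro τ₀ _
      apply Finset.sum_congr rfl
      intro τ' _
      congr 1
      apply propext
      constructor
      · intro h i hi
        rw [Finset.mem_filter] at hi
        rcases h i hi.1 with ⟨j, hj⟩
        refine Fin.cases ?_ ?_ j hj
        · intro hj0
          simp only [Fin.consEquiv_apply, Fin.cons_zero] at hj0
          have := hi.2
          omega
        · intro j hjs
          simp only [Fin.consEquiv_apply, Fin.cons_succ] at hjs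
          exact ⟨j, hjs⟩
      · intro h i hi
        by_cases hτ0 : (τ₀ i : ℕ) < m
        · rcases h i (Finset.mem_filter.mpr ⟨hi, hτ0⟩) with ⟨j, hj⟩
          exact ⟨j.succ, by simpa [Fin.cons_succ] using hj⟩
        · exact ⟨0, by simpa [Fin.cons_zero] using le_of_not_gt hτ0⟩
    rw [hsum]
    calc (∑ τ₀ : Equiv.Perm (Fin n), ∑ τ' : Fin e → Equiv.Perm (Fin n),
          (if ∀ i ∈ (univ : Finset (Fin n)).filter (fun i => ((τ₀ i : ℕ) < m)),
              ∃ j, m ≤ ((τ' j) i : ℕ) then (1:ℝ) else 0))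
        ≤ ∑ τ₀ : Equiv.Perm (Fin n), ((n.factorial : ℝ)) ^ e * (1 - ((m:ℝ)/n) ^ e) ^ m := by
          apply Finset.sum_le_sum
          intro τ₀ _
          have := lemMain n m hmn hn e ((univ : Finset (Fin n)).filter (fun i => ((τ₀ i : ℕ) < m)))
          rwa [cardPre n m hmn τ₀] at this
      _ = (n.factorial : ℝ) * (((n.factorial : ℝ)) ^ e * (1 - ((m:ℝ)/n) ^ e) ^ m) := by
          rw [Finset.sum_const, Finset.card_univ, Fintype.card_perm, Fintype.card_fin, nsmul_eq_mul]
      _ ≤ (1 - ((m:ℝ)/n) ^ (e + 1 - 1)) ^ m * ((n.factorial : ℝ)) ^ (e+1) := by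
          have : e + 1 - 1 = e := rfl
          rw [this, pow_succ]
          ring_nf
          exact le_refl _
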